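/- Let λ, λ₀, and λ_n (n ∈ ℕ) be finite Borel measures on a compact metric space X with λ₀ ≠ 0, λ_n ≪ λ for all n, λ₀ ≪ λ, and sup over measurable sets A of |λ_n(A) − λ₀(A)| tends to 0 as n → ∞ (i.e., λ_n → λ₀ in total variation). Let T : X → Y be a measurable map into a measurable space Y whose σ-algebra is countably generated and contains all singleton sets, and let μ be a σ-finite measure on Y with T_*λ ≪ μ. Let (λ_t^n), (λ_t^0), and (λ_t) be (T,μ)-disintegrations of λ_n, λ₀, and λ respectively. Then there exist a μ-null set E ⊆ Y and a strictly increasing sequence (n_k) of natural numbers such that for every t ∉ E, the supremum over measurable sets A ⊆ X of |λ_t^{n_k}(A) − λ_t^0(A)| tends to 0 as k → ∞. -/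

import Mathlib

open MeasureTheory ENNReal
open scoped symmDiff

/-- A `(T, μ)`-disintegration of a measure `ν` on `X`. -/
def IsDisintegration {X Y : Type*} [MeasurableSpace X] [MeasurableSpace Y]
    (ν : Measure X) (T : X → Y) (μ : Measure Y) (lam : Y → Measure X) : Prop :=
  (∀ᵐ t ∂μ, lam t ((T ⁻¹' {t})ᶜ) = 0) ∧
  (∀ f : X → ℝ≥0∞, Measurable f →
      AEMeasurable (fun t => ∫⁻ x, f x ∂(lam t)) μ) ∧
  (∀ f : X → ℝ≥0∞, Measurable f →
      ∫⁻ x, f x ∂ν = ∫⁻ t, ∫⁻ x, f x ∂(lam t) ∂μ)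


/-- The total-variation-type distance between two (possibly infinite) measures:
the supremum over measurable sets of `|α A - β A|`, computed in `ℝ≥0∞` via
truncated subtraction. -/
noncomputable def tvDist {X : Type*} [MeasurableSpace X] (α β : Measure X) : ℝ≥0∞ :=
  ⨆ (A : Set X) (_ : MeasurableSet A), ((α A - β A) + (β A - α A))

lemma tvDist_comm {X : Type*} [MeasurableSpace X] (α β : Measure X) :
    tvDist α β = tvDist β α := by
  unfold tvDist
  congr 1
  ext A
  congr 1
  ext hA
  exact add_comm _ _

/-- Composition along a countably-valued selector preserves a.e.-measurability. -/
lemma aemeas_comp {Y : Type*} [MeasurableSpace Y] {μ : Measure Y} (f : ℕ → Y → ℝ≥0∞)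
    (hf : ∀ i, AEMeasurable (f i) μ) (σ : Y → ℕ) (hσ : ∀ i, MeasurableSet (σ ⁻¹' {i})) :
    AEMeasurable (fun t => f (σ t) t) μ := by
  have h : (fun t => f (σ t) t) = fun t => ∑' i, (σ ⁻¹' {i}).indicator (f i) t := by
    funext t
    rw [tsum_eq_single (σ t)]
    · simp
    · intro i hi
      exact Set.indicator_of_notMem (by simpa using (Ne.symm hi)) _
  rw [h]
  exact AEMeasurable.ennreal_tsum fun i => (hf i).indicator (hσ i)

/-- Key bound: a measurable "field of sets" selected by `σ` on a region `R`,
where the `lb`-fibers dominate the `lg`-fibers, has integral difference bounded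
by the total-variation distance of the disintegrated measures. -/
lemma key_bound {X Y : Type*} [MeasurableSpace X] [MeasurableSpace Y]
    [MeasurableSingletonClass Y]
    (T : X → Y) (hT : Measurable T) (μ : Measure Y)
    (β γ : Measure X) [IsFiniteMeasure β] [IsFiniteMeasure γ]
    (lb lg : Y → Measure X)
    (hb : IsDisintegration β T μ lb) (hg : IsDisintegration γ T μ lg)
    (A : ℕ → Set X) (hA : ∀ i, MeasurableSet (A i))
    (σ : Y → ℕ) (hσ : ∀ i, MeasurableSet (σ ⁻¹' {i}))
    (R : Set Y) (hR : MeasurableSet R)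
    (hle : ∀ᵐ t ∂μ, t ∈ R → lg t (A (σ t)) ≤ lb t (A (σ t))) :
    ∫⁻ t, R.indicator (fun s => lb s (A (σ s)) - lg s (A (σ s))) t ∂μ ≤ tvDist β γ := by
  classical
  obtain ⟨hbconc, hbmeas, hbint⟩ := hb
  obtain ⟨hgconc, hgmeas, hgint⟩ := hg
  set S : Set X := ⋃ i, A i ∩ T ⁻¹' (σ ⁻¹' {i} ∩ R) with hSdef
  have hS : MeasurableSet S :=
    MeasurableSet.iUnion fun i => (hA i).inter (hT ((hσ i).inter hR))
  -- fiber computation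
  have hSfib : ∀ (t : Y) (m : Measure X), m ((T ⁻¹' {t})ᶜ) = 0 →
      m S = if t ∈ R then m (A (σ t)) else 0 := by
    intro t m hm
    have hcap : ∀ U : Set X, m U = m (U ∩ T ⁻¹' {t}) := by
      intro U
      refine le_antisymm ?_ (measure_mono Set.inter_subset_left)
      calc m U ≤ m (U ∩ T ⁻¹' {t}) + m (U \ T ⁻¹' {t}) := measure_le_inter_add_diff _ _ _
        _ ≤ m (U ∩ T ⁻¹' {t}) + m ((T ⁻¹' {t})ᶜ) :=
            add_le_add_right (measure_mono fun x hx => hx.2) _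
        _ = m (U ∩ T ⁻¹' {t}) := by rw [hm, add_zero]
    by_cases htR : t ∈ R
    · rw [if_pos htR, hcap S, hcap (A (σ t))]
      congr 1
      ext x
      simp only [hSdef, Set.mem_inter_iff, Set.mem_iUnion, Set.mem_preimage,
        Set.mem_singleton_iff]
      constructor
      · rintro ⟨⟨i, hxA, hσi, -⟩, hxt⟩
        rw [hxt] at hσi
        exact ⟨by rwa [hσi], hxt⟩
      · rintro ⟨hxA, hxt⟩
        exact ⟨⟨σ t, hxA, by rw [hxt], by rwa [hxt]⟩, hxt⟩
    · rw [if_neg htR, hcap S]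
      have hempty : S ∩ T ⁻¹' {t} = ∅ := by
        ext x
        simp only [hSdef, Set.mem_inter_iff, Set.mem_iUnion, Set.mem_preimage,
          Set.mem_singleton_iff, Set.mem_empty_iff_false, iff_false, not_and]
        rintro ⟨i, -, -, hR'⟩ hxt
        exact htR (hxt ▸ hR')
      rw [hempty, measure_empty]
  -- integral identities
  have hβS : β S = ∫⁻ t, R.indicator (fun s => lb s (A (σ s))) t ∂μ := by
    have h := hbint (S.indicator 1) (measurable_one.indicator hS)
    simp only [lintegral_indicator_one hS] at h
    refine h.trans (lintegral_congr_ae (hbconc.mono fun t ht => ?_))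
    simp only [Set.indicator_apply]
    exact hSfib t (lb t) ht
  have hγS : γ S = ∫⁻ t, R.indicator (fun s => lg s (A (σ s))) t ∂μ := by
    have h := hgint (S.indicator 1) (measurable_one.indicator hS)
    simp only [lintegral_indicator_one hS] at h
    refine h.trans (lintegral_congr_ae (hgconc.mono fun t ht => ?_))
    simp only [Set.indicator_apply]
    exact hSfib t (lg t) ht
  -- measurability of the γ-side integrand
  have hmg : ∀ i, AEMeasurable (fun t => lg t (A i)) μ := fun i =>
    (hgmeas _ (measurable_one.indicator (hA i))).congr
      (Filter.Eventually.of_forall fun t => lintegral_indicator_one (hA i))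
  have hGmeas : AEMeasurable (fun t => R.indicator (fun s => lg s (A (σ s))) t) μ :=
    (aemeas_comp (fun i t => lg t (A i)) hmg σ hσ).indicator hR
  have hGfin : ∫⁻ t, R.indicator (fun s => lg s (A (σ s))) t ∂μ ≠ ∞ := by
    rw [← hγS]; exact measure_ne_top γ S
  have hle' : (fun t => R.indicator (fun s => lg s (A (σ s))) t) ≤ᵐ[μ]
      fun t => R.indicator (fun s => lb s (A (σ s))) t := by
    refine hle.mono fun t ht => ?_
    by_cases htR : t ∈ R
    · simpa [Set.indicator_of_mem htR] using ht htR
    · simp [Set.indicator_of_notMem htR]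
  calc ∫⁻ t, R.indicator (fun s => lb s (A (σ s)) - lg s (A (σ s))) t ∂μ
      = ∫⁻ t, (R.indicator (fun s => lb s (A (σ s))) t
          - R.indicator (fun s => lg s (A (σ s))) t) ∂μ := by
        refine lintegral_congr fun t => ?_
        by_cases htR : t ∈ R
        · simp [Set.indicator_of_mem htR]
        · simp [Set.indicator_of_notMem htR]
    _ = (∫⁻ t, R.indicator (fun s => lb s (A (σ s))) t ∂μ)
          - ∫⁻ t, R.indicator (fun s => lg s (A (σ s))) t ∂μ :=
        lintegral_sub' hGmeas hGfin hle'
    _ = β S - γ S := by rw [← hβS, ← hγS]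
    _ ≤ tvDist β γ := le_iSup₂_of_le S hS le_self_add

/-- Total variation distance between finite measures is realized along a countable
generating algebra. -/
lemma tvDist_le_iSup {X : Type*} [m : MeasurableSpace X]
    (α β : Measure X) [IsFiniteMeasure α] [IsFiniteMeasure β]
    (𝒜 : Set (Set X)) (h𝒜 : IsSetAlgebra 𝒜)
    (hgen : m = MeasurableSpace.generateFrom 𝒜)
    (A : ℕ → Set X) (hrange : 𝒜 = Set.range A) :
    tvDist α β ≤ ⨆ i, ((α (A i) - β (A i)) + (β (A i) - α (A i))) := by
  have hdense : (α + β).MeasureDense 𝒜 :=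
    Measure.MeasureDense.of_generateFrom_isSetAlgebra_finite (α + β) h𝒜 hgen
  refine iSup₂_le fun S hS => ?_
  refine ENNReal.le_of_forall_pos_le_add fun ε hε _ => ?_
  obtain ⟨B, hB𝒜, hBlt⟩ :=
    hdense.approx S hS (measure_ne_top _ _) (ε : ℝ) (by exact_mod_cast hε)
  rw [ENNReal.ofReal_coe_nnreal] at hBlt
  obtain ⟨i, rfl⟩ : ∃ i, A i = B := by
    have := hrange ▸ hB𝒜
    exact this
  have key : ∀ a b : Measure X, a (S ∆ A i) + b (S ∆ A i) = (α + β) (S ∆ A i) →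
      a S - b S ≤ ((a (A i) - b (A i)) + (b (A i) - a (A i))) + (α + β) (S ∆ A i) := by
    intro a b hab
    rw [tsub_le_iff_left]
    have h2 : b (A i \ S) + a (S \ A i) ≤ (α + β) (S ∆ A i) := by
      rw [← hab]
      have hb' : b (A i \ S) ≤ b (S ∆ A i) :=
        measure_mono (by rw [Set.symmDiff_def]; exact Set.subset_union_right)
      have ha' : a (S \ A i) ≤ a (S ∆ A i) :=
        measure_mono (by rw [Set.symmDiff_def]; exact Set.subset_union_left)
      calc b (A i \ S) + a (S \ A i) ≤ b (S ∆ A i) + a (S ∆ A i) := add_le_add hb' ha'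
        _ = a (S ∆ A i) + b (S ∆ A i) := add_comm _ _
    calc a S ≤ a (S ∩ A i) + a (S \ A i) := measure_le_inter_add_diff _ _ _
      _ ≤ a (A i) + a (S \ A i) :=
          add_le_add_left (measure_mono Set.inter_subset_right) _
      _ ≤ (b (A i) + (a (A i) - b (A i))) + a (S \ A i) :=
          add_le_add_left le_add_tsub _
      _ ≤ ((b (S ∩ A i) + b (A i \ S)) + (a (A i) - b (A i))) + a (S \ A i) := by
          refine add_le_add_left (add_le_add_left ?_ _) _
          calc b (A i) ≤ b ((S ∩ A i) ∪ (A i \ S)) := by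
                refine measure_mono fun x hx => ?_
                by_cases hxS : x ∈ S
                exacts [Or.inl ⟨hxS, hx⟩, Or.inr ⟨hx, hxS⟩]
            _ ≤ b (S ∩ A i) + b (A i \ S) := measure_union_le _ _
      _ = b (S ∩ A i) + ((a (A i) - b (A i)) + (b (A i \ S) + a (S \ A i))) := by ring
      _ ≤ b S + (((a (A i) - b (A i)) + (b (A i) - a (A i))) + (α + β) (S ∆ A i)) := by
          exact add_le_add (measure_mono Set.inter_subset_left)
            (add_le_add le_self_add h2)
  rcases le_total (β S) (α S) with h | h
  · rw [tsub_eq_zero_of_le h, add_zero]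
    refine (key α β (by simp)).trans (add_le_add ?_ hBlt.le)
    exact le_iSup (fun i => (α (A i) - β (A i)) + (β (A i) - α (A i))) i
  · rw [tsub_eq_zero_of_le h, zero_add]
    refine (key β α (by simp [add_comm])).trans (add_le_add ?_ hBlt.le)
    exact le_of_eq (add_comm _ _) |>.trans
      (le_iSup (fun i => (α (A i) - β (A i)) + (β (A i) - α (A i))) i)

theorem disintegration_total_variation_limit
    {X Y : Type*} [MetricSpace X] [CompactSpace X]
    [MeasurableSpace X] [BorelSpace X]
    [MeasurableSpace Y] [MeasurableSpace.CountablyGenerated Y] [MeasurableSingletonClass Y]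
    (ν : Measure X) [IsFiniteMeasure ν]
    (ν₀ : Measure X) [IsFiniteMeasure ν₀] (hν₀ : ν₀ ≠ 0)
    (νn : ℕ → Measure X) [∀ n, IsFiniteMeasure (νn n)]
    (habsn : ∀ n, νn n ≪ ν) (habs₀ : ν₀ ≪ ν)
    (htv : Filter.Tendsto (fun n => tvDist (νn n) ν₀) Filter.atTop (nhds 0))
    (T : X → Y) (hT : Measurable T)
    (μ : Measure Y) [SigmaFinite μ]
    (habs : ν.map T ≪ μ)
    (lamn : ℕ → Y → Measure X) (lam₀ lam : Y → Measure X)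
    (hdisn : ∀ n, IsDisintegration (νn n) T μ (lamn n))
    (hdis₀ : IsDisintegration ν₀ T μ lam₀)
    (hdis : IsDisintegration ν T μ lam) :
    ∃ E : Set Y, μ E = 0 ∧ ∃ φ : ℕ → ℕ, StrictMono φ ∧
      ∀ t ∉ E, Filter.Tendsto (fun k => tvDist (lamn (φ k) t) (lam₀ t))
        Filter.atTop (nhds 0) := by
  classical
  -- countable generating algebra on X
  obtain ⟨b, hbc, hbgen⟩ :=
    (inferInstance : MeasurableSpace.CountablyGenerated X).isCountablyGenerated
  set 𝒜 : Set (Set X) := MeasureTheory.generateSetAlgebra b with h𝒜def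
  have h𝒜 : IsSetAlgebra 𝒜 := MeasureTheory.isSetAlgebra_generateSetAlgebra
  have hc : 𝒜.Countable := MeasureTheory.countable_generateSetAlgebra hbc
  have hgen : ‹MeasurableSpace X› = MeasurableSpace.generateFrom 𝒜 := by
    rw [h𝒜def, MeasureTheory.generateFrom_generateSetAlgebra_eq, ← hbgen]
  obtain ⟨A, hrange⟩ := hc.exists_eq_range ⟨∅, h𝒜.empty_mem⟩
  have hA : ∀ i, MeasurableSet (A i) := fun i => by
    rw [hgen]
    exact MeasurableSpace.measurableSet_generateFrom (hrange ▸ Set.mem_range_self i)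
  -- per-n construction of a dominating measurable function
  have main : ∀ n, ∃ G : Y → ℝ≥0∞, Measurable G ∧
      (∫⁻ t, G t ∂μ) ≤ 4 * tvDist (νn n) ν₀ ∧
      ∀ᵐ t ∂μ, tvDist (lamn n t) (lam₀ t) ≤ G t := by
    intro n
    obtain ⟨hconcn, hmeasn, hintn⟩ := hdisn n
    obtain ⟨hconc0, hmeas0, hint0⟩ := hdis₀
    have hpa : ∀ i, AEMeasurable (fun t => lamn n t (A i)) μ := fun i =>
      (hmeasn _ (measurable_one.indicator (hA i))).congr
        (Filter.Eventually.of_forall fun t => lintegral_indicator_one (hA i))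
    have hqa : ∀ i, AEMeasurable (fun t => lam₀ t (A i)) μ := fun i =>
      (hmeas0 _ (measurable_one.indicator (hA i))).congr
        (Filter.Eventually.of_forall fun t => lintegral_indicator_one (hA i))
    set p : ℕ → Y → ℝ≥0∞ := fun i => (hpa i).mk _ with hpdef
    set q : ℕ → Y → ℝ≥0∞ := fun i => (hqa i).mk _ with hqdef
    have hpm : ∀ i, Measurable (p i) := fun i => (hpa i).measurable_mk
    have hqm : ∀ i, Measurable (q i) := fun i => (hqa i).measurable_mk
    have hver : ∀ᵐ t ∂μ, ∀ i, p i t = lamn n t (A i) ∧ q i t = lam₀ t (A i) := by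
      rw [MeasureTheory.ae_all_iff]
      intro i
      filter_upwards [(hpa i).ae_eq_mk, (hqa i).ae_eq_mk] with t h1 h2
      exact ⟨h1.symm, h2.symm⟩
    set g : ℕ → Y → ℝ≥0∞ := fun i t => (p i t - q i t) + (q i t - p i t) with hgdef
    have hgm : ∀ i, Measurable (g i) := fun i =>
      ((hpm i).sub (hqm i)).add ((hqm i).sub (hpm i))
    set G : Y → ℝ≥0∞ := fun t => ⨆ i, g i t with hGdef
    have hGm : Measurable G := Measurable.iSup hgm
    -- finiteness of fibers
    have hfinb : ∀ᵐ t ∂μ, lamn n t Set.univ < ∞ := by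
      have hmeas : AEMeasurable (fun t => lamn n t Set.univ) μ :=
        (hmeasn _ measurable_one).congr
          (Filter.Eventually.of_forall fun t => lintegral_one)
      refine ae_lt_top' hmeas ?_
      have h1 : ∫⁻ t, lamn n t Set.univ ∂μ = νn n Set.univ := by
        have h := (hintn (fun _ => 1) measurable_one).symm
        simpa [lintegral_one] using h
      rw [h1]; exact measure_ne_top _ _
    have hfin0 : ∀ᵐ t ∂μ, lam₀ t Set.univ < ∞ := by
      have hmeas : AEMeasurable (fun t => lam₀ t Set.univ) μ :=
        (hmeas0 _ measurable_one).congr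
          (Filter.Eventually.of_forall fun t => lintegral_one)
      refine ae_lt_top' hmeas ?_
      have h1 : ∫⁻ t, lam₀ t Set.univ ∂μ = ν₀ Set.univ := by
        have h := (hint0 (fun _ => 1) measurable_one).symm
        simpa [lintegral_one] using h
      rw [h1]; exact measure_ne_top _ _
    -- the selector
    have hex : ∀ t, ∃ i, G t ≤ 2 * g i t ∨ G t = ∞ := by
      intro t
      by_cases hGt : G t = ∞
      · exact ⟨0, Or.inr hGt⟩
      by_cases hG0 : G t = 0
      · exact ⟨0, Or.inl (hG0 ▸ zero_le)⟩
      have hhalf : G t / 2 < G t := ENNReal.half_lt_self hG0 hGt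
      obtain ⟨i, hi⟩ := lt_iSup_iff.1 (show G t / 2 < ⨆ i, g i t from hhalf)
      refine ⟨i, Or.inl ?_⟩
      calc G t = G t / 2 * 2 := (ENNReal.div_mul_cancel two_ne_zero ENNReal.ofNat_ne_top).symm
        _ ≤ g i t * 2 := mul_le_mul_left hi.le 2
        _ = 2 * g i t := mul_comm _ _
    set σ : Y → ℕ := fun t => Nat.find (hex t) with hσdef
    have hσspec : ∀ t, G t ≠ ∞ → G t ≤ 2 * g (σ t) t := fun t ht =>
      (Nat.find_spec (hex t)).resolve_right ht
    have hBmeas : ∀ j, MeasurableSet {t | G t ≤ 2 * g j t ∨ G t = ∞} := by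
      intro j
      have : {t | G t ≤ 2 * g j t ∨ G t = ∞}
          = {t | G t ≤ 2 * g j t} ∪ G ⁻¹' {∞} := by
        ext t; simp [Set.mem_union, Set.mem_preimage]
      rw [this]
      exact (measurableSet_le hGm ((hgm j).const_mul 2)).union
        (hGm (measurableSet_singleton ∞))
    have hσ : ∀ i, MeasurableSet (σ ⁻¹' {i}) := by
      intro i
      have hset : σ ⁻¹' {i} = {t | G t ≤ 2 * g i t ∨ G t = ∞} ∩
          ⋂ (j : ℕ) (_ : j < i), {t | G t ≤ 2 * g j t ∨ G t = ∞}ᶜ := by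
        ext t
        simp only [Set.mem_preimage, Set.mem_singleton_iff, hσdef,
          Set.mem_inter_iff, Set.mem_setOf_eq, Set.mem_iInter, Set.mem_compl_iff]
        rw [Nat.find_eq_iff (hex t)]
      rw [hset]
      exact (hBmeas i).inter
        (MeasurableSet.iInter fun j => MeasurableSet.iInter fun _ => (hBmeas j).compl)
    -- the positivity region
    set R : Set Y := ⋃ i, σ ⁻¹' {i} ∩ {t | q i t ≤ p i t} with hRdef
    have hR : MeasurableSet R :=
      MeasurableSet.iUnion fun i => (hσ i).inter (measurableSet_le (hqm i) (hpm i))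
    have hRmem : ∀ t, t ∈ R ↔ q (σ t) t ≤ p (σ t) t := by
      intro t
      simp only [hRdef, Set.mem_iUnion, Set.mem_inter_iff, Set.mem_preimage,
        Set.mem_singleton_iff, Set.mem_setOf_eq]
      constructor
      · rintro ⟨i, hi, h⟩; rw [hi]; exact h
      · intro h; exact ⟨σ t, rfl, h⟩
    -- apply the key bound twice
    have h1 : ∫⁻ t, R.indicator (fun s => lamn n s (A (σ s)) - lam₀ s (A (σ s))) t ∂μ
        ≤ tvDist (νn n) ν₀ := by
      refine key_bound T hT μ (νn n) ν₀ (lamn n) lam₀ ⟨hconcn, hmeasn, hintn⟩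
        ⟨hconc0, hmeas0, hint0⟩ A hA σ hσ R hR ?_
      filter_upwards [hver] with t hv htR
      have h := (hRmem t).1 htR
      rwa [(hv (σ t)).1, (hv (σ t)).2] at h
    have h2 : ∫⁻ t, Rᶜ.indicator (fun s => lam₀ s (A (σ s)) - lamn n s (A (σ s))) t ∂μ
        ≤ tvDist ν₀ (νn n) := by
      refine key_bound T hT μ ν₀ (νn n) lam₀ (lamn n) ⟨hconc0, hmeas0, hint0⟩
        ⟨hconcn, hmeasn, hintn⟩ A hA σ hσ Rᶜ hR.compl ?_
      filter_upwards [hver] with t hv htR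
      have h := le_of_not_ge fun hcon => htR ((hRmem t).2 hcon)
      rwa [(hv (σ t)).1, (hv (σ t)).2] at h
    -- pointwise domination of G
    have hGle : ∀ᵐ t ∂μ, G t ≤ 2 *
        (R.indicator (fun s => lamn n s (A (σ s)) - lam₀ s (A (σ s))) t
          + Rᶜ.indicator (fun s => lam₀ s (A (σ s)) - lamn n s (A (σ s))) t) := by
      filter_upwards [hver, hfinb, hfin0] with t hv hfb hf0
      have hGfin : G t ≠ ∞ := by
        have hle' : G t ≤ lamn n t Set.univ + lam₀ t Set.univ := by
          refine iSup_le fun i => ?_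
          simp only [hgdef]
          calc (p i t - q i t) + (q i t - p i t) ≤ p i t + q i t :=
                add_le_add tsub_le_self tsub_le_self
            _ = lamn n t (A i) + lam₀ t (A i) := by rw [(hv i).1, (hv i).2]
            _ ≤ lamn n t Set.univ + lam₀ t Set.univ :=
                add_le_add (measure_mono (Set.subset_univ _))
                  (measure_mono (Set.subset_univ _))
        exact ne_top_of_le_ne_top (ENNReal.add_lt_top.2 ⟨hfb, hf0⟩).ne hle'
      have h2g := hσspec t hGfin
      by_cases htR : t ∈ R
      · have hqp := (hRmem t).1 htR
        have hgeq : g (σ t) t = lamn n t (A (σ t)) - lam₀ t (A (σ t)) := by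
          simp only [hgdef]
          rw [tsub_eq_zero_of_le hqp, add_zero, (hv (σ t)).1, (hv (σ t)).2]
        rw [Set.indicator_of_mem htR, Set.indicator_of_notMem (by simpa using htR),
          add_zero]
        calc G t ≤ 2 * g (σ t) t := h2g
          _ = 2 * (lamn n t (A (σ t)) - lam₀ t (A (σ t))) := by rw [hgeq]
      · have hpq : p (σ t) t ≤ q (σ t) t :=
          le_of_not_ge fun hcon => htR ((hRmem t).2 hcon)
        have hgeq : g (σ t) t = lam₀ t (A (σ t)) - lamn n t (A (σ t)) := by
          simp only [hgdef]
          rw [tsub_eq_zero_of_le hpq, zero_add, (hv (σ t)).1, (hv (σ t)).2]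
        rw [Set.indicator_of_notMem htR, Set.indicator_of_mem (by simpa using htR),
          zero_add]
        calc G t ≤ 2 * g (σ t) t := h2g
          _ = 2 * (lam₀ t (A (σ t)) - lamn n t (A (σ t))) := by rw [hgeq]
    -- integral bound
    have ham1 : AEMeasurable
        (fun t => R.indicator (fun s => lamn n s (A (σ s)) - lam₀ s (A (σ s))) t) μ :=
      ((aemeas_comp (fun i t => lamn n t (A i)) hpa σ hσ).sub
        (aemeas_comp (fun i t => lam₀ t (A i)) hqa σ hσ)).indicator hR
    have hGint : ∫⁻ t, G t ∂μ ≤ 4 * tvDist (νn n) ν₀ := by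
      calc ∫⁻ t, G t ∂μ
          ≤ ∫⁻ t, 2 * (R.indicator (fun s => lamn n s (A (σ s)) - lam₀ s (A (σ s))) t
              + Rᶜ.indicator (fun s => lam₀ s (A (σ s)) - lamn n s (A (σ s))) t) ∂μ :=
            lintegral_mono_ae hGle
        _ = 2 * ∫⁻ t, (R.indicator (fun s => lamn n s (A (σ s)) - lam₀ s (A (σ s))) t
              + Rᶜ.indicator (fun s => lam₀ s (A (σ s)) - lamn n s (A (σ s))) t) ∂μ :=
            lintegral_const_mul' 2 _ ENNReal.ofNat_ne_top
        _ = 2 * ((∫⁻ t, R.indicator (fun s => lamn n s (A (σ s)) - lam₀ s (A (σ s))) t ∂μ)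
              + ∫⁻ t, Rᶜ.indicator (fun s => lam₀ s (A (σ s)) - lamn n s (A (σ s))) t ∂μ) := by
            rw [lintegral_add_left' ham1]
        _ ≤ 2 * (tvDist (νn n) ν₀ + tvDist ν₀ (νn n)) :=
            mul_le_mul_right (add_le_add h1 h2) 2
        _ = 4 * tvDist (νn n) ν₀ := by
            rw [tvDist_comm ν₀ (νn n), ← two_mul, ← mul_assoc]
            norm_num
    -- a.e. domination of the fiberwise total variation
    have hae : ∀ᵐ t ∂μ, tvDist (lamn n t) (lam₀ t) ≤ G t := by
      filter_upwards [hver, hfinb, hfin0] with t hv hfb hf0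
      haveI : IsFiniteMeasure (lamn n t) := ⟨hfb⟩
      haveI : IsFiniteMeasure (lam₀ t) := ⟨hf0⟩
      refine (tvDist_le_iSup (lamn n t) (lam₀ t) 𝒜 h𝒜 hgen A hrange).trans ?_
      refine iSup_mono fun i => ?_
      simp only [hgdef]
      rw [(hv i).1, (hv i).2]
    exact ⟨G, hGm, hGint, hae⟩
  choose G hGm hGint hGae using main
  -- subsequence extraction
  have hev : ∀ k : ℕ, ∀ᶠ m in Filter.atTop, tvDist (νn m) ν₀ < (2 : ℝ≥0∞)⁻¹ ^ k := by
    intro k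
    exact htv.eventually_lt_const (ENNReal.pow_pos (by norm_num) k)
  obtain ⟨φ, hφmono, hφ⟩ := Filter.extraction_forall_of_eventually hev
  have hsum : ∑' k, ∫⁻ t, G (φ k) t ∂μ ≠ ∞ := by
    have hle : ∑' k, ∫⁻ t, G (φ k) t ∂μ ≤ ∑' k : ℕ, 4 * (2 : ℝ≥0∞)⁻¹ ^ k :=
      ENNReal.tsum_le_tsum fun k =>
        (hGint (φ k)).trans (mul_le_mul_right (hφ k).le 4)
    refine ne_top_of_le_ne_top ?_ hle
    rw [ENNReal.tsum_mul_left, ENNReal.tsum_geometric]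
    refine ENNReal.mul_ne_top (by norm_num) (ENNReal.inv_ne_top.2 ?_)
    rw [ENNReal.one_sub_inv_two]
    exact ENNReal.inv_ne_zero.2 (by norm_num)
  have htsum_fin : ∀ᵐ t ∂μ, ∑' k, G (φ k) t < ∞ := by
    refine ae_lt_top (Measurable.ennreal_tsum fun k => hGm (φ k)) ?_
    rw [lintegral_tsum fun k => (hGm (φ k)).aemeasurable]
    exact hsum
  have hfinal : ∀ᵐ t ∂μ, Filter.Tendsto (fun k => tvDist (lamn (φ k) t) (lam₀ t))
      Filter.atTop (nhds 0) := by
    have hall : ∀ᵐ t ∂μ, ∀ k, tvDist (lamn (φ k) t) (lam₀ t) ≤ G (φ k) t :=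
      MeasureTheory.ae_all_iff.2 fun k => hGae (φ k)
    filter_upwards [htsum_fin, hall] with t h1 h2
    have hG0 : Filter.Tendsto (fun k => G (φ k) t) Filter.atTop (nhds 0) :=
      ENNReal.tendsto_atTop_zero_of_tsum_ne_top h1.ne
    exact tendsto_of_tendsto_of_tendsto_of_le_of_le tendsto_const_nhds hG0
      (fun k => zero_le) h2
  refine ⟨{t | ¬ Filter.Tendsto (fun k => tvDist (lamn (φ k) t) (lam₀ t))
      Filter.atTop (nhds 0)}, ?_, φ, hφmono, ?_⟩
  · exact MeasureTheory.ae_iff.1 hfinal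
  · intro t ht
    exact not_not.1 ht
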